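/- Let X be a subspace of the Sorgenfrey line ℝₗ and suppose there exist an uncountable subset Z ⊆ X and a strictly decreasing function f : Z → X (with respect to the usual linear order of the reals). If a topological group G contains a subspace homeomorphic to X, then G contains an uncountable discrete subspace; in particular the spread of G is uncountable. -/

import Mathlib

open Set Topology

def SorgenfreyLine : Type := ℝ

notation "ℝₗ" => SorgenfreyLine

noncomputable instance : Field ℝₗ := inferInstanceAs (Field ℝ)

noncomputable instance : LinearOrder ℝₗ := inferInstanceAs (LinearOrder ℝ)

instance : IsStrictOrderedRing ℝₗ := inferInstanceAs (IsStrictOrderedRing ℝ)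

instance : TopologicalSpace ℝₗ :=
  TopologicalSpace.generateFrom {s : Set ℝₗ | ∃ a b : ℝₗ, a < b ∧ s = Set.Ico a b}

/-- The spread of a topological space: the supremum of cardinalities of discrete subspaces. -/
noncomputable def spread (X : Type*) [TopologicalSpace X] : Cardinal :=
  sSup {c : Cardinal | ∃ D : Set X, DiscreteTopology D ∧ Cardinal.mk D = c}

def Cometrizable (Y : Type*) [t : TopologicalSpace Y] : Prop :=
  ∃ τ : TopologicalSpace Y, t ≤ τ ∧ @TopologicalSpace.MetrizableSpace Y τ ∧
    ∀ y : Y, ∀ U ∈ nhds y, ∃ V ∈ nhds y, V ⊆ U ∧ IsClosed[τ] V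

def IsKDense {X : Type*} [TopologicalSpace X] (D : Set X) : Prop :=
  ∀ K : Set X, IsCompact K → ∃ K' : Set X, IsCompact K' ∧ K ⊆ K' ∧ K' ⊆ closure (D ∩ K')

def KSeparable (X : Type*) [TopologicalSpace X] : Prop :=
  ∃ D : Set X, D.Countable ∧ IsKDense D

open Filter

instance : Archimedean ℝₗ := inferInstanceAs (Archimedean ℝ)

lemma sorg_isOpen_Ico (a b : ℝₗ) (h : a < b) : IsOpen (Ico a b) :=
  TopologicalSpace.GenerateOpen.basic _ ⟨a, b, h, rfl⟩

lemma sorg_exists_Ico {O : Set ℝₗ} (hO : IsOpen O) :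
    ∀ x ∈ O, ∃ ε : ℝₗ, 0 < ε ∧ Ico x (x + ε) ⊆ O := by
  have hO' : TopologicalSpace.GenerateOpen
      {s : Set ℝₗ | ∃ a b : ℝₗ, a < b ∧ s = Set.Ico a b} O := hO
  clear hO
  induction hO' with
  | basic s hs =>
    obtain ⟨a, b, hab, rfl⟩ := hs
    intro x hx
    refine ⟨b - x, by simpa using hx.2, fun y hy => ⟨hx.1.trans hy.1, ?_⟩⟩
    have := hy.2
    linarith [hy.2]
  | univ => exact fun x _ => ⟨1, one_pos, subset_univ _⟩
  | inter s t hs ht ihs iht =>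
    intro x hx
    obtain ⟨ε₁, hε₁, h₁⟩ := ihs x hx.1
    obtain ⟨ε₂, hε₂, h₂⟩ := iht x hx.2
    refine ⟨min ε₁ ε₂, lt_min hε₁ hε₂, fun y hy => ⟨h₁ ⟨hy.1, ?_⟩, h₂ ⟨hy.1, ?_⟩⟩⟩
    · exact lt_of_lt_of_le hy.2 (by linarith [min_le_left ε₁ ε₂])
    · exact lt_of_lt_of_le hy.2 (by linarith [min_le_right ε₁ ε₂])
  | sUnion Sf hSf ih =>
    intro x hx
    obtain ⟨t, htS, hxt⟩ := hx
    obtain ⟨ε, hε, hsub⟩ := ih t htS x hxt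
    exact ⟨ε, hε, hsub.trans (subset_sUnion_of_mem htS)⟩

lemma sorg_nhds_basis (x : ℝₗ) :
    (𝓝 x).HasBasis (fun ε : ℝₗ => 0 < ε) (fun ε => Ico x (x + ε)) := by
  rw [Filter.hasBasis_iff]
  intro t
  constructor
  · intro ht
    obtain ⟨O, hOt, hO, hxO⟩ := mem_nhds_iff.mp ht
    obtain ⟨ε, hε, hsub⟩ := sorg_exists_Ico hO x hxO
    exact ⟨ε, hε, hsub.trans hOt⟩
  · rintro ⟨ε, hε, hsub⟩
    exact Filter.mem_of_superset
      ((sorg_isOpen_Ico x (x + ε) (by linarith)).mem_nhds ⟨le_rfl, by linarith⟩) hsub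

lemma uncountable_of_union {α ι : Type*} [Countable ι] {S : Set α} (hS : ¬ S.Countable)
    {T : ι → Set α} (hsub : S ⊆ ⋃ k, T k) : ∃ k, ¬ (T k ∩ S).Countable := by
  by_contra hc
  push_neg at hc
  have hsub' : S ⊆ ⋃ k, (T k ∩ S) := fun x hx => by
    obtain ⟨k, hk⟩ := mem_iUnion.1 (hsub hx)
    exact mem_iUnion.2 ⟨k, hk, hx⟩
  exact hS (Set.Countable.mono hsub' (countable_iUnion hc))

/-- If $X$ is a subspace of the Sorgenfrey line admitting an uncountable $Z \subseteq X$ and a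
strictly decreasing $f : Z \to X$, then any topological group containing a copy of $X$
contains an uncountable discrete subspace; in particular its spread is uncountable. -/
theorem uncountable_discrete_of_strictAnti {G : Type*} [Group G] [TopologicalSpace G]
    [IsTopologicalGroup G] (X : Set ℝₗ) (Z : Set ℝₗ) (hZX : Z ⊆ X) (hZ : ¬ Z.Countable)
    (f : Z → X) (hf : StrictAnti fun z : Z => (f z : ℝₗ))
    (S : Set G) (h : Nonempty (S ≃ₜ X)) :
    (∃ D : Set G, DiscreteTopology D ∧ ¬ D.Countable) ∧ Cardinal.aleph0 < spread G := by
  classical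
  obtain ⟨E⟩ := h
  set xz : Z → X := fun i => ⟨i.1, hZX i.2⟩ with hxz
  set p : Z → G := fun i => ((E.symm (xz i) : S) : G) with hp
  set q : Z → G := fun i => ((E.symm (f i) : S) : G) with hq
  set c : Z → G := fun i => p i * q i with hc
  have hfanti : ∀ {i j : Z}, (i : ℝₗ) < (j : ℝₗ) → (f j : ℝₗ) < (f i : ℝₗ) :=
    fun hij => hf (Subtype.coe_lt_coe.mp hij)
  have hfanti' : ∀ {i j : Z}, (i : ℝₗ) < (j : ℝₗ) → (f j : ℝₗ) ≤ (f i : ℝₗ) :=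
    fun hij => le_of_lt (hfanti hij)
  -- transfer lemmas between coordinates and G
  have upP : ∀ (l : Filter Z) (i : Z),
      Tendsto (fun j : Z => (j : ℝₗ)) l (𝓝 (i : ℝₗ)) → Tendsto p l (𝓝 (p i)) := by
    intro l i hx
    have h1 : Tendsto xz l (𝓝 (xz i)) := tendsto_subtype_rng.mpr hx
    exact (continuous_subtype_val.tendsto _).comp ((E.symm.continuous.tendsto _).comp h1)
  have upQ : ∀ (l : Filter Z) (i : Z),
      Tendsto (fun j : Z => (f j : ℝₗ)) l (𝓝 ((f i : ℝₗ))) → Tendsto q l (𝓝 (q i)) := by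
    intro l i hx
    have h1 : Tendsto (fun j : Z => f j) l (𝓝 (f i)) := tendsto_subtype_rng.mpr hx
    exact (continuous_subtype_val.tendsto _).comp ((E.symm.continuous.tendsto _).comp h1)
  have downP : ∀ (l : Filter Z) (i : Z),
      Tendsto p l (𝓝 (p i)) → Tendsto (fun j : Z => (j : ℝₗ)) l (𝓝 (i : ℝₗ)) := by
    intro l i hpt
    have h1 : Tendsto (fun j : Z => E.symm (xz j)) l (𝓝 (E.symm (xz i))) :=
      tendsto_subtype_rng.mpr hpt
    have h2 := (E.continuous.tendsto _).comp h1
    have h3 : Tendsto xz l (𝓝 (xz i)) := by simpa [Function.comp_def] using h2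
    have h4 : Tendsto (fun j : Z => ((xz j : ℝₗ))) l (𝓝 ((xz i : ℝₗ))) :=
      (continuous_subtype_val.tendsto _).comp h3
    exact h4
  have downQ : ∀ (l : Filter Z) (i : Z),
      Tendsto q l (𝓝 (q i)) → Tendsto (fun j : Z => (f j : ℝₗ)) l (𝓝 ((f i : ℝₗ))) := by
    intro l i hqt
    have h1 : Tendsto (fun j : Z => E.symm (f j)) l (𝓝 (E.symm (f i))) :=
      tendsto_subtype_rng.mpr hqt
    have h2 := (E.continuous.tendsto _).comp h1
    have h3 : Tendsto f l (𝓝 (f i)) := by simpa [Function.comp_def] using h2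
    exact (continuous_subtype_val.tendsto _).comp h3
  -- Lemma A : isolation from the right
  have lemA : ∀ i : Z, ∃ ε : ℝₗ, 0 < ε ∧ ∃ W ∈ 𝓝 (c i),
      ∀ j : Z, (i : ℝₗ) < (j : ℝₗ) → (j : ℝₗ) < (i : ℝₗ) + ε → c j ∉ W := by
    intro i
    by_contra hcon
    push_neg at hcon
    set l : Filter Z := (comap (fun j : Z => (j : ℝₗ)) (𝓝 (i : ℝₗ)) ⊓
        𝓟 {j : Z | (i : ℝₗ) < (j : ℝₗ)}) ⊓ comap c (𝓝 (c i)) with hl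
    have hbasis := (((sorg_nhds_basis (i : ℝₗ)).comap (fun j : Z => (j : ℝₗ))).inf_principal
        {j : Z | (i : ℝₗ) < (j : ℝₗ)}).inf ((𝓝 (c i)).basis_sets.comap c)
    have hne : l.NeBot := by
      rw [hl]
      refine hbasis.neBot_iff.mpr ?_
      rintro ⟨ε, W⟩ ⟨hε, hW⟩
      obtain ⟨j, hj1, hj2, hj3⟩ := hcon ε hε W hW
      exact ⟨j, ⟨⟨le_of_lt hj1, hj2⟩, hj1⟩, hj3⟩
    have hxt : Tendsto (fun j : Z => (j : ℝₗ)) l (𝓝 (i : ℝₗ)) :=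
      tendsto_iff_comap.mpr (le_trans inf_le_left inf_le_left)
    have hct : Tendsto c l (𝓝 (c i)) := tendsto_iff_comap.mpr inf_le_right
    have hpt := upP l i hxt
    have hqt : Tendsto q l (𝓝 (q i)) := by
      have h1 := hpt.inv.mul hct
      have h2 : (fun j : Z => (p j)⁻¹ * c j) = q := by
        funext j; rw [hc]; simp
      have h3 : (p i)⁻¹ * c i = q i := by rw [hc]; simp
      rw [h2, h3] at h1
      exact h1
    have hfx := downQ l i hqt
    have hev1 : ∀ᶠ j : Z in l, (f j : ℝₗ) ∈ Ico ((f i : ℝₗ)) ((f i : ℝₗ) + 1) := by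
      apply hfx.eventually
      have hopen := sorg_isOpen_Ico ((f i : ℝₗ)) ((f i : ℝₗ) + 1) (by linarith)
      exact eventually_mem_set.mpr (hopen.mem_nhds ⟨le_rfl, by linarith⟩)
    have hev2 : ∀ᶠ j : Z in l, (i : ℝₗ) < (j : ℝₗ) := by
      have : {j : Z | (i : ℝₗ) < (j : ℝₗ)} ∈ l := by
        rw [hl]
        exact le_principal_iff.mp (le_trans inf_le_left inf_le_right)
      exact this
    obtain ⟨j, hmem, hlt⟩ := (hev1.and hev2).exists
    exact absurd (hfanti hlt) (not_lt.mpr hmem.1)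
  -- goodness
  set Good : Z → Prop :=
    fun i => ∀ b : ℝₗ, (f i : ℝₗ) < b → ∃ j : Z, (j : ℝₗ) < (i : ℝₗ) ∧ (f j : ℝₗ) < b
    with hGoodDef
  -- Lemma B : isolation from the left, for good points
  have lemB : ∀ i : Z, Good i → ∃ ε : ℝₗ, 0 < ε ∧ ∃ W ∈ 𝓝 (c i),
      ∀ j : Z, (i : ℝₗ) - ε < (j : ℝₗ) → (j : ℝₗ) < (i : ℝₗ) → c j ∉ W := by
    intro i hGood
    by_contra hcon
    push_neg at hcon
    set l : Filter Z := (comap (fun j : Z => (f j : ℝₗ)) (𝓝 ((f i : ℝₗ))) ⊓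
        𝓟 {j : Z | (j : ℝₗ) < (i : ℝₗ)}) ⊓ comap c (𝓝 (c i)) with hl
    have hbasis := (((sorg_nhds_basis ((f i : ℝₗ))).comap
        (fun j : Z => (f j : ℝₗ))).inf_principal
        {j : Z | (j : ℝₗ) < (i : ℝₗ)}).inf ((𝓝 (c i)).basis_sets.comap c)
    have hne : l.NeBot := by
      rw [hl]
      refine hbasis.neBot_iff.mpr ?_
      rintro ⟨δ, W⟩ ⟨hδ, hW⟩
      obtain ⟨j₀, hj₀i, hj₀f⟩ := hGood ((f i : ℝₗ) + δ) (by linarith)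
      obtain ⟨j, hj1, hj2, hj3⟩ := hcon ((i : ℝₗ) - (j₀ : ℝₗ)) (by linarith) W hW
      have hj₀j : (j₀ : ℝₗ) < (j : ℝₗ) := by linarith
      refine ⟨j, ⟨⟨⟨hfanti' hj2, ?_⟩, hj2⟩, hj3⟩⟩
      exact lt_trans (hfanti hj₀j) hj₀f
    have hfx : Tendsto (fun j : Z => (f j : ℝₗ)) l (𝓝 ((f i : ℝₗ))) :=
      tendsto_iff_comap.mpr (le_trans inf_le_left inf_le_left)
    have hct : Tendsto c l (𝓝 (c i)) := tendsto_iff_comap.mpr inf_le_right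
    have hqt := upQ l i hfx
    have hpt : Tendsto p l (𝓝 (p i)) := by
      have h1 := hct.mul hqt.inv
      have h2 : (fun j : Z => c j * (q j)⁻¹) = p := by
        funext j; rw [hc]; simp
      have h3 : c i * (q i)⁻¹ = p i := by rw [hc]; simp
      rw [h2, h3] at h1
      exact h1
    have hxt := downP l i hpt
    have hev1 : ∀ᶠ j : Z in l, (j : ℝₗ) ∈ Ico ((i : ℝₗ)) ((i : ℝₗ) + 1) := by
      apply hxt.eventually
      have hopen := sorg_isOpen_Ico ((i : ℝₗ)) ((i : ℝₗ) + 1) (by linarith)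
      exact eventually_mem_set.mpr (hopen.mem_nhds ⟨le_rfl, by linarith⟩)
    have hev2 : ∀ᶠ j : Z in l, (j : ℝₗ) < (i : ℝₗ) := by
      have : {j : Z | (j : ℝₗ) < (i : ℝₗ)} ∈ l := by
        rw [hl]
        exact le_principal_iff.mp (le_trans inf_le_left inf_le_right)
      exact this
    obtain ⟨j, hmem, hlt⟩ := (hev1.and hev2).exists
    exact absurd hmem.1 (not_le.mpr hlt)
  -- the set of non-good points is countable
  have hbadc : {i : Z | ¬ Good i}.Countable := by
    set B := {i : Z | ¬ Good i} with hB
    have hPrat : ∀ i : ↥B, ∃ r : ℚ, (f i.1 : ℝₗ) < (r : ℝₗ) ∧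
        ∀ j : Z, (j : ℝₗ) < (i.1 : ℝₗ) → (r : ℝₗ) < (f j : ℝₗ) := by
      rintro ⟨i, hi⟩
      simp only [hB, mem_setOf_eq, hGoodDef] at hi
      push_neg at hi
      obtain ⟨b, hb1, hb2⟩ := hi
      obtain ⟨r, hr1, hr2⟩ := exists_rat_btwn hb1
      exact ⟨r, hr1, fun j hj => lt_of_lt_of_le hr2 (hb2 j hj)⟩
    choose F hF1 hF2 using hPrat
    have hinj : Function.Injective F := by
      intro a b hab
      by_contra hne
      have hcoe : (a.1 : ℝₗ) ≠ (b.1 : ℝₗ) := by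
        intro hh
        exact hne (Subtype.ext (Subtype.ext hh))
      rcases hcoe.lt_or_gt with hlt | hlt
      · have h1 := hF2 b a.1 hlt
        have h2 := hF1 a
        rw [hab] at h2
        exact absurd (h2.trans h1) (lt_irrefl _)
      · have h1 := hF2 a b.1 hlt
        have h2 := hF1 b
        rw [← hab] at h2
        exact absurd (h2.trans h1) (lt_irrefl _)
    have : Countable ↥B := Function.Injective.countable hinj
    exact countable_coe_iff.mp this
  -- combined isolation data
  have key : ∀ i : Z, ∃ ε : ℝₗ, ∃ W : Set G, 0 < ε ∧ W ∈ 𝓝 (c i) ∧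
      (Good i → ∀ j : Z, j ≠ i → (i : ℝₗ) - ε < (j : ℝₗ) → (j : ℝₗ) < (i : ℝₗ) + ε →
        c j ∉ W) := by
    intro i
    by_cases hg : Good i
    · obtain ⟨εa, hεa, Wa, hWa, hA⟩ := lemA i
      obtain ⟨εb, hεb, Wb, hWb, hB⟩ := lemB i hg
      refine ⟨min εa εb, Wa ∩ Wb, lt_min hεa hεb, inter_mem hWa hWb,
        fun _ j hji h1 h2 hmem => ?_⟩
      have hcoe : (j : ℝₗ) ≠ (i : ℝₗ) := fun hh => hji (Subtype.ext hh)
      rcases hcoe.lt_or_gt with hlt | hlt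
      · exact hB j (by linarith [min_le_right εa εb]) hlt hmem.2
      · exact hA j hlt (by linarith [min_le_left εa εb]) hmem.1
    · exact ⟨1, univ, one_pos, univ_mem, fun hg' => absurd hg' hg⟩
  choose ε W hε hW hiso using key
  -- uncountably many good points
  have hunivZ : ¬ (univ : Set Z).Countable := by
    intro hcnt
    exact hZ (countable_coe_iff.mp (countable_univ_iff.mp hcnt))
  have hgoodU : ¬ {i : Z | Good i}.Countable := by
    intro hcnt
    have hsub : (univ : Set Z) ⊆ {i : Z | Good i} ∪ {i : Z | ¬ Good i} :=
      fun i _ => (em (Good i)).elim Or.inl Or.inr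
    exact hunivZ (Set.Countable.mono hsub (hcnt.union hbadc))
  -- pigeonhole on ε
  have hsub1 : {i : Z | Good i} ⊆ ⋃ n : ℕ, {j : Z | 1 / ((n : ℝₗ) + 1) < ε j} := by
    intro i _
    obtain ⟨n, hn⟩ := exists_nat_one_div_lt (hε i)
    exact mem_iUnion.2 ⟨n, hn⟩
  obtain ⟨n, hn⟩ := uncountable_of_union hgoodU hsub1
  have hn1 : (0 : ℝₗ) < (n : ℝₗ) + 1 := by positivity
  set d : ℝₗ := 1 / (2 * ((n : ℝₗ) + 1)) with hd
  have hdpos : 0 < d := by rw [hd]; positivity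
  have h2d : 2 * d = 1 / ((n : ℝₗ) + 1) := by
    rw [hd]; field_simp
  -- pigeonhole on position
  have hsub2 : ({j : Z | 1 / ((n : ℝₗ) + 1) < ε j} ∩ {i : Z | Good i}) ⊆
      ⋃ r : ℚ, {j : Z | (j : ℝₗ) < (r : ℝₗ) ∧ (r : ℝₗ) < (j : ℝₗ) + d} := by
    intro i _
    obtain ⟨r, hr1, hr2⟩ := exists_rat_btwn (show (i : ℝₗ) < (i : ℝₗ) + d by linarith)
    exact mem_iUnion.2 ⟨r, hr1, hr2⟩
  obtain ⟨r, hr⟩ := uncountable_of_union hn hsub2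
  set A : Set Z := {j : Z | (j : ℝₗ) < (r : ℝₗ) ∧ (r : ℝₗ) < (j : ℝₗ) + d} ∩
      ({j : Z | 1 / ((n : ℝₗ) + 1) < ε j} ∩ {i : Z | Good i}) with hA
  have hAunc : ¬ A.Countable := hr
  have hsep : ∀ i ∈ A, ∀ j ∈ A, j ≠ i → c j ∉ W i := by
    intro i hi j hj hne
    have hgood : Good i := hi.2.2
    have hεi : 1 / ((n : ℝₗ) + 1) < ε i := hi.2.1
    have hi1 : (i : ℝₗ) < (r : ℝₗ) := hi.1.1
    have hi2 : (r : ℝₗ) < (i : ℝₗ) + d := hi.1.2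
    have hj1 : (j : ℝₗ) < (r : ℝₗ) := hj.1.1
    have hj2 : (r : ℝₗ) < (j : ℝₗ) + d := hj.1.2
    exact hiso i hgood j hne (by linarith) (by linarith)
  set D : Set G := c '' A with hD
  have hDdisc : DiscreteTopology ↥D := by
    rw [discreteTopology_subtype_iff]
    rintro x ⟨i, hiA, rfl⟩
    rw [nhdsWithin, inf_assoc, inf_principal, inf_principal_eq_bot]
    refine mem_of_superset (hW i) ?_
    intro y hy hmem
    obtain ⟨hy1, j, hjA, hjy⟩ := hmem
    rcases eq_or_ne j i with hji | hji
    · exact hy1 (show y ∈ {c i} by rw [mem_singleton_iff, ← hjy, hji])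
    · rw [← hjy] at hy
      exact hsep i hiA j hjA hji hy
  have hcval : ∀ i : Z, c i ∈ W i := fun i => mem_of_mem_nhds (hW i)
  have hDunc : ¬ D.Countable := by
    intro hcnt
    apply hAunc
    have hinj : InjOn c A := by
      intro i hi j hj hij
      by_contra hne
      have : c j ∉ W i := hsep i hi j hj (Ne.symm hne)
      rw [← hij] at this
      exact this (hcval i)
    exact Set.countable_of_injective_of_countable_image hinj (by rw [← hD]; exact hcnt)
  have hmk : Cardinal.aleph0 < Cardinal.mk D := by
    refine lt_of_not_ge fun hle => hDunc ?_
    exact Cardinal.le_aleph0_iff_set_countable.mp hle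
  refine ⟨⟨D, hDdisc, hDunc⟩, ?_⟩
  have hmem : Cardinal.mk ↥D ∈
      {cd : Cardinal | ∃ D' : Set G, DiscreteTopology D' ∧ Cardinal.mk D' = cd} :=
    ⟨D, hDdisc, rfl⟩
  have hbdd : BddAbove
      {cd : Cardinal | ∃ D' : Set G, DiscreteTopology D' ∧ Cardinal.mk D' = cd} := by
    refine ⟨Cardinal.mk G, ?_⟩
    rintro x ⟨D', _, rfl⟩
    exact Cardinal.mk_set_le D'
  exact lt_of_lt_of_le hmk (le_csSup hbdd hmem)
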